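/- For every positive integer n, the polynomial D_n(t) = t^9 - (n+3)t^8 - (n-4)t^7 + (2n-8)t^6 + (2n+8)t^5 + (2n-8)t^4 - (2n-11)t^3 + (3n-5)t^2 + (3n+4)t - 4(n+1) has exactly one real root in the interval (2, ∞). -/

import Mathlib

open Polynomial

/-- The denominator polynomial `D_n(t)`, over `ℝ`. -/
noncomputable def Dpoly (n : ℕ) : Polynomial ℝ :=
  X ^ 9 - C ((n : ℝ) + 3) * X ^ 8 - C ((n : ℝ) - 4) * X ^ 7 + C (2 * (n : ℝ) - 8) * X ^ 6
    + C (2 * (n : ℝ) + 8) * X ^ 5 + C (2 * (n : ℝ) - 8) * X ^ 4 - C (2 * (n : ℝ) - 11) * X ^ 3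
    + C (3 * (n : ℝ) - 5) * X ^ 2 + C (3 * (n : ℝ) + 4) * X - C (4 * ((n : ℝ) + 1))

/-- the `n = 0` part of `D`. -/
noncomputable def aF : ℝ → ℝ := fun t =>
  t^9 - 3*t^8 + 4*t^7 - 8*t^6 + 8*t^5 - 8*t^4 + 11*t^3 - 5*t^2 + 4*t - 4

/-- minus the coefficient of `n` in `D`. -/
noncomputable def bF : ℝ → ℝ := fun t =>
  t^8 + t^7 - 2*t^6 - 2*t^5 - 2*t^4 + 2*t^3 - 3*t^2 - 3*t + 4

lemma eval_D (n : ℕ) (t : ℝ) : (Dpoly n).eval t = aF t - n * bF t := by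
  simp [Dpoly, aF, bF]; ring

lemma bF_pos {t : ℝ} (ht : 2 ≤ t) : 0 < bF t := by
  have hs : (0:ℝ) ≤ t - 2 := by linarith
  have key : bF t = 162 + 873*(t-2) + 1785*(t-2)^2 + 1938*(t-2)^3 + 1258*(t-2)^4
      + 506*(t-2)^5 + 124*(t-2)^6 + 17*(t-2)^7 + (t-2)^8 := by
    unfold bF; ring
  rw [key]
  nlinarith [pow_nonneg hs 2, pow_nonneg hs 3, pow_nonneg hs 4, pow_nonneg hs 5,
    pow_nonneg hs 6, pow_nonneg hs 7, pow_nonneg hs 8]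

lemma cont_aF : Continuous aF := by unfold aF; fun_prop
lemma cont_bF : Continuous bF := by unfold bF; fun_prop

lemma hasDerivAt_aF (t : ℝ) : HasDerivAt aF
    (9*t^8 - 24*t^7 + 28*t^6 - 48*t^5 + 40*t^4 - 32*t^3 + 33*t^2 - 10*t + 4) t := by
  have h := (((((((((hasDerivAt_pow 9 t).sub ((hasDerivAt_pow 8 t).const_mul (3:ℝ))).add
      ((hasDerivAt_pow 7 t).const_mul (4:ℝ))).sub ((hasDerivAt_pow 6 t).const_mul (8:ℝ))).add
      ((hasDerivAt_pow 5 t).const_mul (8:ℝ))).sub ((hasDerivAt_pow 4 t).const_mul (8:ℝ))).add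
      ((hasDerivAt_pow 3 t).const_mul (11:ℝ))).sub ((hasDerivAt_pow 2 t).const_mul (5:ℝ))).add
      ((hasDerivAt_id t).const_mul (4:ℝ))).sub_const (4:ℝ)
  refine h.congr_deriv ?_
  norm_num; ring

lemma hasDerivAt_bF (t : ℝ) : HasDerivAt bF
    (8*t^7 + 7*t^6 - 12*t^5 - 10*t^4 - 8*t^3 + 6*t^2 - 6*t - 3) t := by
  have h := ((((((((hasDerivAt_pow 8 t).add (hasDerivAt_pow 7 t)).sub
      ((hasDerivAt_pow 6 t).const_mul (2:ℝ))).sub ((hasDerivAt_pow 5 t).const_mul (2:ℝ))).sub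
      ((hasDerivAt_pow 4 t).const_mul (2:ℝ))).add ((hasDerivAt_pow 3 t).const_mul (2:ℝ))).sub
      ((hasDerivAt_pow 2 t).const_mul (3:ℝ))).sub ((hasDerivAt_id t).const_mul (3:ℝ))).add_const (4:ℝ)
  refine h.congr_deriv ?_
  norm_num; ring

lemma W_pos {t : ℝ} (ht : 2 ≤ t) :
    0 < (9*t^8 - 24*t^7 + 28*t^6 - 48*t^5 + 40*t^4 - 32*t^3 + 33*t^2 - 10*t + 4) * bF t
      - aF t * (8*t^7 + 7*t^6 - 12*t^5 - 10*t^4 - 8*t^3 + 6*t^2 - 6*t - 3) := by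
  have hs : (0:ℝ) ≤ t - 2 := by linarith
  have key : (9*t^8 - 24*t^7 + 28*t^6 - 48*t^5 + 40*t^4 - 32*t^3 + 33*t^2 - 10*t + 4) * bF t
      - aF t * (8*t^7 + 7*t^6 - 12*t^5 - 10*t^4 - 8*t^3 + 6*t^2 - 6*t - 3)
      = 46944 + 364836*(t-2) + 1387683*(t-2)^2 + 3367478*(t-2)^3 + 5760617*(t-2)^4
        + 7312076*(t-2)^5 + 7096228*(t-2)^6 + 5358404*(t-2)^7 + 3175630*(t-2)^8
        + 1479256*(t-2)^9 + 538750*(t-2)^10 + 151492*(t-2)^11 + 32172*(t-2)^12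
        + 4976*(t-2)^13 + 527*(t-2)^14 + 34*(t-2)^15 + (t-2)^16 := by
    unfold aF bF; ring
  rw [key]
  nlinarith [pow_nonneg hs 2, pow_nonneg hs 3, pow_nonneg hs 4, pow_nonneg hs 5,
    pow_nonneg hs 6, pow_nonneg hs 7, pow_nonneg hs 8, pow_nonneg hs 9, pow_nonneg hs 10,
    pow_nonneg hs 11, pow_nonneg hs 12, pow_nonneg hs 13, pow_nonneg hs 14, pow_nonneg hs 15,
    pow_nonneg hs 16]

lemma mono_g : StrictMonoOn (fun t => aF t / bF t) (Set.Ici (2:ℝ)) := by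
  apply StrictMonoOn.mono (s := Set.Ici (2:ℝ)) ?_ le_rfl
  apply strictMonoOn_of_deriv_pos (convex_Ici 2)
  · exact (cont_aF.continuousOn.div cont_bF.continuousOn
      (fun x hx => (bF_pos hx).ne'))
  · intro x hx
    rw [interior_Ici] at hx
    have hx2 : (2:ℝ) ≤ x := le_of_lt hx
    have hb := bF_pos hx2
    have hd := (hasDerivAt_aF x).div (hasDerivAt_bF x) hb.ne'
    rw [show (fun t => aF t / bF t) = aF / bF from rfl, hd.deriv]
    exact div_pos (W_pos hx2) (by positivity)

theorem stmt_3 (n : ℕ) (hn : 0 < n) :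
    ∃! t : ℝ, 2 < t ∧ (Dpoly n).IsRoot t := by
  set T : ℝ := (n:ℝ) + 4 with hT
  have h2T : (2:ℝ) < T := by
    have : (0:ℝ) ≤ (n:ℝ) := Nat.cast_nonneg n
    simp [hT]; linarith
  have hn1 : (1:ℝ) ≤ (n:ℝ) := by exact_mod_cast hn
  -- f 2 < 0
  have hf2 : (Dpoly n).eval 2 < 0 := by
    rw [eval_D]
    have : aF 2 = -56 := by norm_num [aF]
    have h2 : bF 2 = 162 := by norm_num [bF]
    rw [this, h2]; nlinarith
  -- f T > 0
  have hfT : 0 < (Dpoly n).eval T := by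
    rw [eval_D]
    have hs : (0:ℝ) ≤ T - 2 := by linarith
    have key : aF T - (n:ℝ) * bF T = aF T - (T - 4) * bF T := by rw [hT]; ring_nf
    have key2 : aF T - (T - 4) * bF T
        = 268 + 1572*(T-2) + 3206*(T-2)^2 + 3318*(T-2)^3 + 1962*(T-2)^4
          + 674*(T-2)^5 + 126*(T-2)^6 + 10*(T-2)^7 := by
      unfold aF bF; ring
    rw [key, key2]
    nlinarith [pow_nonneg hs 2, pow_nonneg hs 3, pow_nonneg hs 4, pow_nonneg hs 5,
      pow_nonneg hs 6, pow_nonneg hs 7]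
  -- IVT
  have hcont : ContinuousOn (fun t => (Dpoly n).eval t) (Set.Icc 2 T) :=
    (Dpoly n).continuous_aeval.continuousOn
  have hsub := intermediate_value_Ioo (le_of_lt h2T) hcont
  have hmem : (0:ℝ) ∈ Set.Ioo ((Dpoly n).eval 2) ((Dpoly n).eval T) := ⟨hf2, hfT⟩
  obtain ⟨c, hc, hc0⟩ := hsub hmem
  -- root value equals n under g
  have root_g : ∀ y : ℝ, 2 < y → (Dpoly n).IsRoot y → aF y / bF y = n := by
    intro y hy hroot
    have hb := bF_pos (le_of_lt hy)
    have := hroot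
    rw [IsRoot, eval_D] at this
    field_simp
    linarith
  refine ⟨c, ⟨hc.1, hc0⟩, ?_⟩
  intro y ⟨hy1, hy2⟩
  exact mono_g.injOn (Set.mem_Ici.mpr (le_of_lt hy1)) (Set.mem_Ici.mpr (le_of_lt hc.1))
    (by rw [root_g y hy1 hy2, root_g c hc.1 hc0])
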